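/- Every Hausdorff ring topology 𝒰 on the ring I of finite-image endomorphisms such that (I, 𝒰) is a Baire space is discrete. Equivalently, I does not admit a nondiscrete Hausdorff ring topology for which I is a Baire space. -/

import Mathlib

/-- The (nonunital) ring of endomorphisms with finite image of the countable
elementary abelian `p`-group `ℕ →₀ ZMod p`. -/
def finRangeEndSubring (p : ℕ) : NonUnitalSubring (Module.End (ZMod p) (ℕ →₀ ZMod p)) where
  carrier := {α : Module.End (ZMod p) (ℕ →₀ ZMod p) | (Set.range α).Finite}
  zero_mem' := (Set.finite_singleton 0).subset (by rintro _ ⟨x, rfl⟩; simp)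
  add_mem' {a b} ha hb := (Set.Finite.image2 (· + ·) ha hb).subset
    (by rintro _ ⟨x, rfl⟩
        exact Set.mem_image2_of_mem ⟨x, rfl⟩ ⟨x, rfl⟩)
  neg_mem' {a} ha := (ha.image Neg.neg).subset
    (by rintro _ ⟨x, rfl⟩; exact ⟨a x, ⟨x, rfl⟩, rfl⟩)
  mul_mem' {a b} ha hb := ha.subset (by rintro _ ⟨x, rfl⟩; exact ⟨b x, rfl⟩)

noncomputable def Dmap (p : ℕ) (σ : ℕ → ℕ) (m : ℕ) : Module.End (ZMod p) (ℕ →₀ ZMod p) :=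
  ∑ i ∈ Finset.range m, (Finsupp.lsingle (σ i)).comp (Finsupp.lapply i)

lemma Dmap_apply (p : ℕ) (σ : ℕ → ℕ) (m : ℕ) (v : ℕ →₀ ZMod p) :
    Dmap p σ m v = ∑ i ∈ Finset.range m, Finsupp.single (σ i) (v i) := by
  simp [Dmap]

lemma Dmap_apply_coe (p : ℕ) (σ : ℕ → ℕ) (m : ℕ) (v : ℕ →₀ ZMod p) (j : ℕ) :
    Dmap p σ m v j = ∑ i ∈ Finset.range m, if σ i = j then v i else 0 := by
  rw [Dmap_apply]
  simp [Finsupp.finset_sum_apply, Finsupp.single_apply]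

lemma Dmap_id_apply_coe (p : ℕ) (m : ℕ) (v : ℕ →₀ ZMod p) (j : ℕ) :
    Dmap p id m v j = if j < m then v j else 0 := by
  rw [Dmap_apply_coe]
  simp only [id_eq]
  rw [Finset.sum_ite_eq' (Finset.range m) j (fun i => v i)]
  simp

lemma Dmap_mem (p : ℕ) [Fact p.Prime] (σ : ℕ → ℕ) (m : ℕ) :
    Dmap p σ m ∈ finRangeEndSubring p := by
  haveI : NeZero p := ⟨(Fact.out : p.Prime).ne_zero⟩
  have h : Set.range (Dmap p σ m) ⊆
      Set.range (fun c : Fin m → ZMod p => ∑ i : Fin m, Finsupp.single (σ i) (c i)) := by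
    rintro _ ⟨v, rfl⟩
    refine ⟨fun i => v i, ?_⟩
    rw [Dmap_apply, ← Fin.sum_univ_eq_sum_range]
  exact (Set.finite_range _).subset h


set_option maxHeartbeats 1000000 in
set_option synthInstance.maxHeartbeats 400000 in
/-- Every Hausdorff ring topology on the ring of finite-image endomorphisms of a
countable elementary abelian `p`-group which makes it a Baire space is discrete. -/
theorem finRangeEnd_baire_discrete (p : ℕ) [Fact p.Prime]
    (t : TopologicalSpace (finRangeEndSubring p))
    (htr : @IsTopologicalRing (finRangeEndSubring p) t _)
    (ht2 : @T2Space (finRangeEndSubring p) t)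
    (hbaire : @BaireSpace (finRangeEndSubring p) t) :
    @DiscreteTopology (finRangeEndSubring p) t := by
  letI := t
  haveI := htr; haveI := ht2; haveI := hbaire
  haveI : ContinuousMul (finRangeEndSubring p) := htr.toIsTopologicalSemiring.toContinuousMul
  haveI : ContinuousAdd (finRangeEndSubring p) := htr.toIsTopologicalSemiring.toContinuousAdd
  haveI : IsTopologicalAddGroup (finRangeEndSubring p) :=
    IsTopologicalRing.to_topologicalAddGroup
  haveI : Nonempty (finRangeEndSubring p) := ⟨0⟩
  let E : ℕ → finRangeEndSubring p := fun m => ⟨Dmap p id m, Dmap_mem p id m⟩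
  let C : ℕ → Set (finRangeEndSubring p) := fun m => {x | E m * x = x}
  have hclosed : ∀ m, IsClosed (C m) := by
    intro m
    have h : C m = (fun x : finRangeEndSubring p => E m * x - x) ⁻¹' {0} := by
      ext x; simp [C, sub_eq_zero]
    rw [h]
    exact isClosed_singleton.preimage ((continuous_mul_left (E m)).sub continuous_id)
  have hcover : (⋃ m, C m) = Set.univ := by
    ext x
    simp only [Set.mem_iUnion, Set.mem_univ, iff_true]
    have hx : (Set.range (x : Module.End (ZMod p) (ℕ →₀ ZMod p))).Finite := x.2
    refine ⟨(hx.toFinset.sup fun w => w.support.sup id) + 1, ?_⟩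
    have key : ∀ (v : ℕ →₀ ZMod p) (j : ℕ),
        (hx.toFinset.sup fun w => w.support.sup id) + 1 ≤ j →
        ((x : Module.End (ZMod p) (ℕ →₀ ZMod p)) v) j = 0 := by
      intro v j hj
      by_contra hne
      have hmem : j ∈ ((x : Module.End (ZMod p) (ℕ →₀ ZMod p)) v).support :=
        Finsupp.mem_support_iff.mpr hne
      have h1 : j ≤ ((x : Module.End (ZMod p) (ℕ →₀ ZMod p)) v).support.sup id :=
        Finset.le_sup (f := id) hmem
      have h2 : ((x : Module.End (ZMod p) (ℕ →₀ ZMod p)) v).support.sup id ≤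
          hx.toFinset.sup fun w => w.support.sup id :=
        Finset.le_sup (f := fun w => w.support.sup id) (hx.mem_toFinset.mpr ⟨v, rfl⟩)
      omega
    show E _ * x = x
    apply Subtype.ext
    show Dmap p id _ * (x : Module.End (ZMod p) (ℕ →₀ ZMod p)) = x
    apply LinearMap.ext; intro v
    apply Finsupp.ext; intro j
    rw [Module.End.mul_apply, Dmap_id_apply_coe]
    by_cases hj : j < (hx.toFinset.sup fun w => w.support.sup id) + 1
    · rw [if_pos hj]
    · rw [if_neg hj, key v j (by omega)]
  obtain ⟨n, x0, hx0⟩ := nonempty_interior_of_iUnion_of_closed hclosed hcover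
  have hx0C : x0 ∈ C n := interior_subset hx0
  -- W : open nbhd of 0 inside C n
  set W : Set (finRangeEndSubring p) := (fun y : finRangeEndSubring p => y + x0) ⁻¹' interior (C n)
    with hWdef
  have hWopen : IsOpen W := (isOpen_interior).preimage (continuous_add_right x0)
  have hW0 : (0 : finRangeEndSubring p) ∈ W := by
    show (0 : finRangeEndSubring p) + x0 ∈ interior (C n)
    convert hx0 using 2; exact zero_add x0
  have hkey : ∀ (z : finRangeEndSubring p), E n * z = z →
      ∀ (v : ℕ →₀ ZMod p) (j : ℕ), ¬ j < n →
      ((z : Module.End (ZMod p) (ℕ →₀ ZMod p)) v) j = 0 := by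
    intro z hz v j hj
    have hz' : Dmap p id n * (z : Module.End (ZMod p) (ℕ →₀ ZMod p)) = z :=
      congrArg Subtype.val hz
    have h := congrArg
      (fun f : Module.End (ZMod p) (ℕ →₀ ZMod p) => (f v) j) hz'
    simp only [Module.End.mul_apply] at h
    rw [Dmap_id_apply_coe, if_neg hj] at h
    exact h.symm
  have hWsub : W ⊆ C n := by
    intro y hy
    have h0 : y + x0 ∈ interior (C n) := hy
    have h1'' : y + x0 ∈ C n := interior_subset h0
    have h1 : E n * (y + x0) = y + x0 := h1''
    have h2 : E n * x0 = x0 := hx0C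
    show E n * y = y
    apply Subtype.ext
    show Dmap p id n * (y : Module.End (ZMod p) (ℕ →₀ ZMod p)) = y
    apply LinearMap.ext; intro v
    apply Finsupp.ext; intro j
    rw [Module.End.mul_apply, Dmap_id_apply_coe]
    by_cases hj : j < n
    · rw [if_pos hj]
    · rw [if_neg hj]
      have ha : (((y + x0 : finRangeEndSubring p) :
          Module.End (ZMod p) (ℕ →₀ ZMod p)) v) j = 0 := hkey _ h1 v j hj
      have hb : ((x0 : Module.End (ZMod p) (ℕ →₀ ZMod p)) v) j = 0 := hkey _ h2 v j hj
      have hc : (((y + x0 : finRangeEndSubring p) :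
          Module.End (ZMod p) (ℕ →₀ ZMod p)) v) j =
          ((y : Module.End (ZMod p) (ℕ →₀ ZMod p)) v) j +
          ((x0 : Module.End (ZMod p) (ℕ →₀ ZMod p)) v) j := rfl
    -- combine
      rw [hc, hb, add_zero] at ha
      exact ha.symm
  -- Γ : shift of first n coordinates
  set Γ : finRangeEndSubring p := ⟨Dmap p (fun i => n + i) n, Dmap_mem p _ n⟩ with hΓdef
  have hEΓ : E n * Γ = 0 := by
    apply Subtype.ext
    show Dmap p id n * Dmap p (fun i => n + i) n = 0
    apply LinearMap.ext; intro v
    apply Finsupp.ext; intro j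
    rw [Module.End.mul_apply, Dmap_id_apply_coe]
    by_cases hj : j < n
    · rw [if_pos hj, Dmap_apply_coe]
      rw [LinearMap.zero_apply, Finsupp.coe_zero, Pi.zero_apply]
      apply Finset.sum_eq_zero
      intro i _
      rw [if_neg (by omega)]
    · rw [if_neg hj]; simp
  set U : Set (finRangeEndSubring p) :=
    W ∩ (fun y : finRangeEndSubring p => Γ * y) ⁻¹' W with hUdef
  have hUopen : IsOpen U := hWopen.inter (hWopen.preimage (continuous_mul_left Γ))
  have hU0 : (0 : finRangeEndSubring p) ∈ U := by
    constructor
    · exact hW0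
    · have h := mul_zero Γ
      show Γ * 0 ∈ W
      rw [h]
      exact hW0
  have hUzero : U = {0} := by
    apply Set.eq_singleton_iff_unique_mem.mpr
    refine ⟨hU0, ?_⟩
    intro y hy
    have hy1 : E n * y = y := hWsub hy.1
    have hy2 : E n * (Γ * y) = Γ * y := hWsub hy.2
    have hGy : Γ * y = 0 := by
      have h4 : E n * Γ * y = E n * (Γ * y) := mul_assoc (E n) Γ y
      have h5 : (0 : finRangeEndSubring p) * y = 0 := zero_mul y
      have h6 : E n * Γ * y = 0 := by rw [hEΓ]; exact h5
      rw [h4, hy2] at h6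
      exact h6
    apply Subtype.ext
    apply LinearMap.ext; intro v
    apply Finsupp.ext; intro j
    have hy1' : Dmap p id n * (y : Module.End (ZMod p) (ℕ →₀ ZMod p)) = y :=
      congrArg Subtype.val hy1
    have hGy' : Dmap p (fun i => n + i) n * (y : Module.End (ZMod p) (ℕ →₀ ZMod p)) = 0 :=
      congrArg Subtype.val hGy
    rw [ZeroMemClass.coe_zero, LinearMap.zero_apply, Finsupp.coe_zero, Pi.zero_apply]
    by_cases hj : j < n
    · have h0 : (Dmap p (fun i => n + i) n ((y : Module.End (ZMod p) (ℕ →₀ ZMod p)) v)) (n + j)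
          = 0 := by
        rw [← Module.End.mul_apply, hGy']
        simp
      rw [Dmap_apply_coe] at h0
      have : ∑ i ∈ Finset.range n, (if n + i = n + j then
          ((y : Module.End (ZMod p) (ℕ →₀ ZMod p)) v) i else 0)
          = ((y : Module.End (ZMod p) (ℕ →₀ ZMod p)) v) j := by
        have hcond : ∀ i, (n + i = n + j) = (i = j) := by
          intro i; simp
        simp only [hcond]
        rw [Finset.sum_ite_eq' (Finset.range n) j]
        rw [if_pos (Finset.mem_range.mpr hj)]
      rw [this] at h0
      exact h0
    · have := congrArg (fun f : Module.End (ZMod p) (ℕ →₀ ZMod p) => (f v) j) hy1'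
      simp only [Module.End.mul_apply] at this
      rw [Dmap_id_apply_coe, if_neg hj] at this
      exact this.symm
  have hzero : IsOpen ({(0 : finRangeEndSubring p)} : Set (finRangeEndSubring p)) := by
    rw [← hUzero]; exact hUopen
  have hsing : ∀ x : finRangeEndSubring p, IsOpen ({x} : Set (finRangeEndSubring p)) := by
    intro x
    have h : ({x} : Set (finRangeEndSubring p)) = (fun z => z - x) ⁻¹' {0} := by
      ext z
      simp only [Set.mem_singleton_iff, Set.mem_preimage]
      exact ⟨fun h => by rw [h]; exact sub_self x, fun h => sub_eq_zero.mp h⟩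
    rw [h]
    exact hzero.preimage (continuous_id.sub continuous_const)
  exact discreteTopology_iff_isOpen_singleton.mpr hsing
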